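/- Let n, d ∈ ℕ, σ > 0, and let g : {0,1}^n × ℝ^d → {0,1} be measurable in its second argument for each first argument. For b ∈ {0,1}^n and x ∈ ℝ^d define h(b, x) = P(g(b, x + ε) = 1), where ε is a random vector in ℝ^d with i.i.d. N(0,σ²) coordinates, and define the inner smoothed classifier g̃_X(b, x) = 1 if h(b, x) > 1/2 and g̃_X(b, x) = 0 otherwise. Fix x ∈ ℝ^d and suppose that for every b ∈ {0,1}^n one has 0 < h(b, x) < 1 and h(b, x) ≠ 1/2. Let ε_X > 0 satisfy ε_X < σ · |Φ⁻¹(h(b, x))| for every b ∈ {0,1}^n. Then for every δ ∈ ℝ^d with ‖δ‖₂ ≤ ε_X and every b ∈ {0,1}^n, g̃_X(b, x + δ) = g̃_X(b, x); consequently, for any random vector Γ in {0,1}^n and any a ∈ {0,1}^n, P(g̃_X(a ⊕ Γ, x + δ) = 1) = P(g̃_X(a ⊕ Γ, x) = 1), so the doubly smoothed classifier g̃_{A,X}(a, x) = argmax_{c ∈ {0,1}} P(g̃_X(a ⊕ Γ, x) = c) satisfies g̃_{A,X}(a, x + δ) = g̃_{A,X}(a, x). -/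

import Mathlib

open MeasureTheory ProbabilityTheory
open scoped ENNReal

/-- The cumulative distribution function `Φ` of the standard Gaussian measure `N(0,1)` on `ℝ`. -/
noncomputable def Phi (x : ℝ) : ℝ := ((gaussianReal 0 1) (Set.Iic x)).toReal

/-- The inverse `Φ⁻¹` of the standard Gaussian CDF on `(0,1)`. -/
noncomputable def PhiInv (p : ℝ) : ℝ := Function.invFun Phi p

open Real Filter
open scoped NNReal Topology

section Helpers


lemma gaussian_pdf_conv_ident (v₁ v₂ : ℝ≥0) (h1 : v₁ ≠ 0) (h2 : v₂ ≠ 0) (y x : ℝ) :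
    gaussianPDFReal 0 v₁ x * gaussianPDFReal x v₂ y
      = gaussianPDFReal 0 (v₁ + v₂) y * gaussianPDFReal ((v₁ : ℝ) * y / ((v₁ : ℝ) + v₂)) (v₁ * v₂ / (v₁ + v₂)) x := by
  have ha : (0:ℝ) < v₁ := lt_of_le_of_ne v₁.coe_nonneg (by exact_mod_cast (Ne.symm h1))
  have hb : (0:ℝ) < v₂ := lt_of_le_of_ne v₂.coe_nonneg (by exact_mod_cast (Ne.symm h2))
  have hab : (0:ℝ) < (v₁:ℝ) + v₂ := by linarith
  have hw : ((v₁ * v₂ / (v₁ + v₂) : ℝ≥0) : ℝ) = (v₁:ℝ) * v₂ / ((v₁:ℝ) + v₂) := by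
    push_cast; ring
  simp only [gaussianPDFReal, hw]
  rw [NNReal.coe_add]
  have hπ : (0:ℝ) < π := pi_pos
  have e1 : (√(2 * π * v₁))⁻¹ * ((√(2 * π * v₂))⁻¹ * (rexp (-(x - 0) ^ 2 / (2 * v₁)) * rexp (-(y - x) ^ 2 / (2 * v₂)))) =
      ((√(2 * π * v₁)) * (√(2 * π * v₂)))⁻¹ * (rexp (-(x - 0) ^ 2 / (2 * v₁)) * rexp (-(y - x) ^ 2 / (2 * v₂))) := by
    rw [mul_inv]; ring
  have hsqrt : √(2 * π * v₁) * √(2 * π * v₂)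
      = √(2 * π * ((v₁:ℝ) + v₂)) * √(2 * π * ((v₁:ℝ) * v₂ / ((v₁:ℝ) + v₂))) := by
    rw [← Real.sqrt_mul (by positivity), ← Real.sqrt_mul (by positivity)]
    congr 1
    field_simp
  have hexp : rexp (-(x - 0) ^ 2 / (2 * v₁)) * rexp (-(y - x) ^ 2 / (2 * v₂))
      = rexp (-(y - 0) ^ 2 / (2 * ((v₁:ℝ) + v₂)))
        * rexp (-(x - (v₁:ℝ) * y / ((v₁:ℝ) + v₂)) ^ 2 / (2 * ((v₁:ℝ) * v₂ / ((v₁:ℝ) + v₂)))) := by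
    rw [← Real.exp_add, ← Real.exp_add]
    congr 1
    field_simp
    ring
  calc (√(2 * π * v₁))⁻¹ * rexp (-(x - 0) ^ 2 / (2 * v₁)) * ((√(2 * π * v₂))⁻¹ * rexp (-(y - x) ^ 2 / (2 * v₂)))
      = ((√(2 * π * v₁)) * (√(2 * π * v₂)))⁻¹ * (rexp (-(x - 0) ^ 2 / (2 * v₁)) * rexp (-(y - x) ^ 2 / (2 * v₂))) := by
        rw [mul_inv]; ring
    _ = ((√(2 * π * ((v₁:ℝ) + v₂))) * (√(2 * π * ((v₁:ℝ) * v₂ / ((v₁:ℝ) + v₂)))))⁻¹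
        * (rexp (-(y - 0) ^ 2 / (2 * ((v₁:ℝ) + v₂)))
          * rexp (-(x - (v₁:ℝ) * y / ((v₁:ℝ) + v₂)) ^ 2 / (2 * ((v₁:ℝ) * v₂ / ((v₁:ℝ) + v₂))))) := by
        rw [hsqrt, hexp]
    _ = _ := by rw [mul_inv]; ring

lemma measurable_pdf2 (v : ℝ≥0) : Measurable (fun p : ℝ × ℝ => gaussianPDF p.1 v p.2) := by
  apply Measurable.ennreal_ofReal
  unfold gaussianPDFReal
  exact ((((measurable_snd.sub measurable_fst).pow_const 2).neg.div_const _).exp.const_mul _)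

lemma lintegral_gaussian_conv (v₁ v₂ : ℝ≥0) (h1 : v₁ ≠ 0) (h2 : v₂ ≠ 0) (y : ℝ) :
    ∫⁻ x, gaussianPDF 0 v₁ x * gaussianPDF x v₂ y = gaussianPDF 0 (v₁ + v₂) y := by
  have hw : v₁ * v₂ / (v₁ + v₂) ≠ 0 := by
    rw [div_ne_zero_iff]
    exact ⟨mul_ne_zero h1 h2, by simp [h1]⟩
  have key : ∀ x, gaussianPDF 0 v₁ x * gaussianPDF x v₂ y
      = gaussianPDF 0 (v₁ + v₂) y * gaussianPDF ((v₁ : ℝ) * y / ((v₁ : ℝ) + v₂)) (v₁ * v₂ / (v₁ + v₂)) x := by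
    intro x
    simp only [gaussianPDF]
    rw [← ENNReal.ofReal_mul (gaussianPDFReal_nonneg _ _ _),
        ← ENNReal.ofReal_mul (gaussianPDFReal_nonneg _ _ _),
        gaussian_pdf_conv_ident v₁ v₂ h1 h2 y x]
  simp_rw [key]
  rw [lintegral_const_mul _ (measurable_gaussianPDF _ _), lintegral_gaussianPDF_eq_one _ hw, mul_one]

lemma gaussianReal_conv (v₁ v₂ : ℝ≥0) :
    Measure.map (fun p : ℝ × ℝ => p.1 + p.2) ((gaussianReal 0 v₁).prod (gaussianReal 0 v₂))
      = gaussianReal 0 (v₁ + v₂) := by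
  by_cases h1 : v₁ = 0
  · subst h1
    rw [gaussianReal_zero_var, Measure.dirac_prod, Measure.map_map measurable_add measurable_prodMk_left]
    simp only [Function.comp_def, zero_add]
    exact Measure.map_id
  by_cases h2 : v₂ = 0
  · subst h2
    rw [gaussianReal_zero_var, Measure.prod_dirac, Measure.map_map measurable_add measurable_prodMk_right]
    simp only [Function.comp_def, add_zero]
    exact (Measure.map_id).trans (by simp)
  -- both nonzero
  ext s hs
  rw [Measure.map_apply measurable_add hs, Measure.prod_apply (measurable_add hs)]
  have step1 : ∀ x : ℝ, (gaussianReal 0 v₂) (Prod.mk x ⁻¹' ((fun p : ℝ × ℝ => p.1 + p.2) ⁻¹' s))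
      = ∫⁻ y in s, gaussianPDF x v₂ y := by
    intro x
    have : Prod.mk x ⁻¹' ((fun p : ℝ × ℝ => p.1 + p.2) ⁻¹' s) = (fun y => x + y) ⁻¹' s := rfl
    rw [this, ← Measure.map_apply (measurable_const_add x) hs, gaussianReal_map_const_add,
      zero_add, gaussianReal_apply _ h2]
  simp_rw [step1]
  rw [gaussianReal_of_var_ne_zero _ h1]
  rw [lintegral_withDensity_eq_lintegral_mul _ (measurable_gaussianPDF _ _)
    (Measurable.lintegral_prod_right (f := fun x y => gaussianPDF x v₂ y) (measurable_pdf2 v₂))]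
  simp only [Pi.mul_apply]
  have swap : ∫⁻ x, gaussianPDF 0 v₁ x * ∫⁻ y in s, gaussianPDF x v₂ y
      = ∫⁻ y in s, ∫⁻ x, gaussianPDF 0 v₁ x * gaussianPDF x v₂ y := by
    have meas : AEMeasurable (Function.uncurry fun x y => gaussianPDF 0 v₁ x * gaussianPDF x v₂ y)
        (volume.prod (volume.restrict s)) := by
      apply Measurable.aemeasurable
      exact ((measurable_gaussianPDF 0 v₁).comp measurable_fst).mul (measurable_pdf2 v₂)
    rw [← lintegral_lintegral_swap meas]
    congr 1
    ext x
    rw [lintegral_const_mul _ (measurable_gaussianPDF _ _)]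
  rw [swap]
  simp_rw [lintegral_gaussian_conv v₁ v₂ h1 h2]
  rw [← gaussianReal_apply _ (by simp [h1]) s]

lemma measurable_sum_mul {m : ℕ} (c : Fin m → ℝ) :
    Measurable (fun y : Fin m → ℝ => ∑ i, c i * y i) :=
  Finset.measurable_sum _ fun i _ => (measurable_pi_apply i).const_mul _

lemma map_sum_pi (v : ℝ≥0) : ∀ (m : ℕ) (c : Fin m → ℝ),
    Measure.map (fun y : Fin m → ℝ => ∑ i, c i * y i) (Measure.pi fun _ => gaussianReal 0 v)
      = gaussianReal 0 (⟨∑ i, (c i)^2, Finset.sum_nonneg fun i _ => sq_nonneg _⟩ * v) := by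
  intro m
  induction m with
  | zero =>
      intro c
      have : (fun y : Fin 0 → ℝ => ∑ i, c i * y i) = fun _ => (0:ℝ) := by
        funext y; simp
      rw [this, Measure.map_const]
      simp only [measure_univ, one_smul]
      have hzero : (⟨∑ i, (c i)^2, Finset.sum_nonneg fun i _ => sq_nonneg _⟩ : ℝ≥0) = 0 := by
        ext; simp
      convert (gaussianReal_zero_var (0:ℝ)).symm using 2
      exact mul_eq_zero_of_left hzero v
  | succ m ih =>
      intro c
      set e := MeasurableEquiv.piFinSuccAbove (fun _ : Fin (m+1) => ℝ) 0 with he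
      have mp := measurePreserving_piFinSuccAbove (fun _ : Fin (m+1) => gaussianReal 0 v) 0
      have hcomp : (fun y : Fin (m+1) → ℝ => ∑ i, c i * y i)
          = (fun p : ℝ × (Fin m → ℝ) => c 0 * p.1 + ∑ j, c j.succ * p.2 j) ∘ e := by
        funext y
        simp only [Function.comp_apply, he, MeasurableEquiv.piFinSuccAbove_apply]
        rw [Fin.sum_univ_succ]
        congr 1
      have hTmeas : Measurable (fun p : ℝ × (Fin m → ℝ) => c 0 * p.1 + ∑ j, c j.succ * p.2 j) :=
        (measurable_fst.const_mul _).add ((measurable_sum_mul (fun j => c j.succ)).comp measurable_snd)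
      rw [hcomp, ← Measure.map_map hTmeas e.measurable, mp.map_eq]
      have hT2 : (fun p : ℝ × (Fin m → ℝ) => c 0 * p.1 + ∑ j, c j.succ * p.2 j)
          = (fun p : ℝ × ℝ => p.1 + p.2) ∘ (Prod.map (fun a => c 0 * a) (fun z : Fin m → ℝ => ∑ j, c j.succ * z j)) := by
        funext p; rfl
      rw [hT2, ← Measure.map_map measurable_add ((measurable_const_mul _).prodMap (measurable_sum_mul _)),
        ← Measure.map_prod_map _ _ (measurable_const_mul _) (measurable_sum_mul _)]
      have h1 : Measure.map (fun a : ℝ => c 0 * a) (gaussianReal 0 v)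
          = gaussianReal 0 (⟨(c 0)^2, sq_nonneg _⟩ * v) := by
        rw [gaussianReal_map_const_mul]
        norm_num
        rfl
      rw [h1, ih (fun j => c j.succ), gaussianReal_conv]
      congr 1
      ext
      push_cast
      show c 0 ^ 2 * (v:ℝ) + (∑ j : Fin m, c j.succ ^ 2) * v = (∑ i, c i ^ 2) * v
      rw [Fin.sum_univ_succ]
      ring

lemma lintegral_pi_prod : ∀ {m : ℕ} (μ : Fin m → Measure ℝ) [∀ i, IsProbabilityMeasure (μ i)]
    (f : Fin m → ℝ → ℝ≥0∞) (_ : ∀ i, Measurable (f i)),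
    ∫⁻ y, ∏ i, f i (y i) ∂(Measure.pi μ) = ∏ i, ∫⁻ x, f i x ∂(μ i) := by
  intro m
  induction m with
  | zero =>
      intro μ _ f hf
      simp only [Finset.univ_eq_empty, Finset.prod_empty]
      rw [lintegral_const, one_mul, measure_univ]
  | succ m ih =>
      intro μ _ f hf
      have mp := (measurePreserving_piFinSuccAbove μ 0).symm
      set e := MeasurableEquiv.piFinSuccAbove (fun _ : Fin (m+1) => ℝ) 0 with he
      have hmeas : Measurable (fun y : Fin (m+1) → ℝ => ∏ i, f i (y i)) :=
        Finset.measurable_prod _ fun i _ => (hf i).comp (measurable_pi_apply i)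
      rw [← mp.lintegral_comp hmeas]
      have hpt : ∀ p : ℝ × (Fin m → ℝ), (∏ i, f i ((e.symm p) i))
          = f 0 p.1 * ∏ j, f (Fin.succ j) (p.2 j) := by
        intro p
        rw [Fin.prod_univ_succ]
        simp [he, MeasurableEquiv.piFinSuccAbove_symm_apply]
      simp_rw [hpt]
      rw [lintegral_prod]
      · have : ∀ a : ℝ, ∫⁻ z, f 0 a * ∏ j, f (Fin.succ j) (z j) ∂(Measure.pi fun j => μ (Fin.succAbove 0 j))
            = f 0 a * ∏ j, ∫⁻ x, f (Fin.succ j) x ∂(μ (Fin.succAbove 0 j)) := by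
          intro a
          have hgm : Measurable (fun z : Fin m → ℝ => ∏ j, f (Fin.succ j) (z j)) :=
            Finset.measurable_prod _ fun j _ => (hf _).comp (measurable_pi_apply j)
          rw [lintegral_const_mul _ hgm]
          congr 1
          have := ih (fun j => μ (Fin.succAbove 0 j)) (fun j => f (Fin.succ j)) (fun j => hf _)
          simpa using this
        simp_rw [this]
        rw [lintegral_mul_const _ (hf 0), Fin.prod_univ_succ]
        congr 1
      · apply Measurable.aemeasurable
        exact ((hf 0).comp measurable_fst).mul
          (Finset.measurable_prod _ fun j _ => (hf _).comp ((measurable_pi_apply j).comp measurable_snd))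

lemma pi_withDensity {m : ℕ} (μ : Fin m → Measure ℝ) [∀ i, IsProbabilityMeasure (μ i)]
    (f : Fin m → ℝ → ℝ≥0∞) (hf : ∀ i, Measurable (f i))
    [∀ i, IsProbabilityMeasure ((μ i).withDensity (f i))] :
    Measure.pi (fun i => (μ i).withDensity (f i))
      = (Measure.pi μ).withDensity (fun y => ∏ i, f i (y i)) := by
  refine Measure.pi_eq fun s hs => ?_
  have hF : Measurable (fun y : Fin m → ℝ => ∏ i, f i (y i)) :=
    Finset.measurable_prod _ fun i _ => (hf i).comp (measurable_pi_apply i)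
  rw [withDensity_apply _ (MeasurableSet.univ_pi hs)]
  have hind : ∀ y : Fin m → ℝ, (Set.univ.pi s).indicator (fun y => ∏ i, f i (y i)) y
      = ∏ i, (s i).indicator (f i) (y i) := by
    intro y
    by_cases hy : y ∈ Set.univ.pi s
    · rw [Set.indicator_of_mem hy]
      apply Finset.prod_congr rfl
      intro i _
      rw [Set.indicator_of_mem (hy i (Set.mem_univ i))]
    · rw [Set.indicator_of_notMem hy]
      simp only [Set.mem_pi, Set.mem_univ, forall_true_left, not_forall] at hy
      obtain ⟨i, hi⟩ := hy
      refine (Finset.prod_eq_zero (Finset.mem_univ i) ?_).symm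
      rw [Set.indicator_of_notMem hi]
  rw [← lintegral_indicator (MeasurableSet.univ_pi hs)]
  simp_rw [hind]
  rw [lintegral_pi_prod μ _ (fun i => (hf i).indicator (hs i))]
  apply Finset.prod_congr rfl
  intro i _
  rw [withDensity_apply _ (hs i), ← lintegral_indicator (hs i)]

lemma pi_map_add {m : ℕ} (v : ℝ≥0) (δ : Fin m → ℝ) :
    Measure.map (fun y : Fin m → ℝ => y + δ) (Measure.pi fun _ => gaussianReal 0 v)
      = Measure.pi (fun i => gaussianReal (δ i) v) := by
  symm
  refine Measure.pi_eq fun s hs => ?_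
  have hmeas : Measurable (fun y : Fin m → ℝ => y + δ) :=
    measurable_add_const δ
  rw [Measure.map_apply hmeas (MeasurableSet.univ_pi hs)]
  have : (fun y : Fin m → ℝ => y + δ) ⁻¹' (Set.univ.pi s) = Set.univ.pi (fun i => (· + δ i) ⁻¹' (s i)) := by
    ext y
    simp only [Set.mem_preimage, Set.mem_pi, Set.mem_univ, forall_true_left, true_implies]
    rfl
  rw [this, Measure.pi_pi]
  apply Finset.prod_congr rfl
  intro i _
  rw [← Measure.map_apply (measurable_add_const (δ i)) (hs i), gaussianReal_map_add_const]
  norm_num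

-- per-coordinate shift density
lemma gaussianReal_shift_withDensity (v : ℝ≥0) (hv : v ≠ 0) (c : ℝ) :
    gaussianReal c v = (gaussianReal 0 v).withDensity
      (fun t => ENNReal.ofReal (rexp ((2 * c * t - c ^ 2) / (2 * (v : ℝ))))) := by
  have hvpos : (0:ℝ) < v := lt_of_le_of_ne v.coe_nonneg (by exact_mod_cast (Ne.symm hv))
  have hmeas : Measurable (fun t : ℝ => ENNReal.ofReal (rexp ((2 * c * t - c ^ 2) / (2 * (v : ℝ))))) :=
    Measurable.ennreal_ofReal (((measurable_id.const_mul _).sub_const _).div_const _).exp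
  rw [gaussianReal_of_var_ne_zero _ hv, gaussianReal_of_var_ne_zero _ hv,
    ← withDensity_mul _ (measurable_gaussianPDF _ _) hmeas]
  congr 1
  funext t
  simp only [Pi.mul_apply, gaussianPDF]
  rw [← ENNReal.ofReal_mul (gaussianPDFReal_nonneg _ _ _)]
  congr 1
  unfold gaussianPDFReal
  rw [mul_assoc (√(2 * π * (v:ℝ)))⁻¹, ← Real.exp_add]
  congr 1
  rw [Real.exp_eq_exp]
  field_simp
  ring

lemma Phi_ofReal (y : ℝ) : ENNReal.ofReal (Phi y) = gaussianReal 0 1 (Set.Iic y) :=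
  ENNReal.ofReal_toReal (measure_ne_top _ _)

lemma Phi_eq_integral (y : ℝ) : Phi y = ∫ t in Set.Iic y, gaussianPDFReal 0 1 t := by
  rw [Phi, gaussianReal_apply_eq_integral 0 one_ne_zero, ENNReal.toReal_ofReal]
  exact setIntegral_nonneg measurableSet_Iic fun t _ => gaussianPDFReal_nonneg _ _ _

lemma Phi_strictMono : StrictMono Phi := by
  intro a b hab
  have key : Phi b = Phi a + ∫ t in Set.Ioc a b, gaussianPDFReal 0 1 t := by
    rw [Phi_eq_integral, Phi_eq_integral, ← setIntegral_union (Set.Iic_disjoint_Ioc le_rfl)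
      measurableSet_Ioc ((integrable_gaussianPDFReal 0 1).integrableOn)
      ((integrable_gaussianPDFReal 0 1).integrableOn), Set.Iic_union_Ioc_eq_Iic hab.le]
  have hpos : 0 < ∫ t in Set.Ioc a b, gaussianPDFReal 0 1 t := by
    rw [setIntegral_pos_iff_support_of_nonneg_ae
      (ae_of_all _ fun t => gaussianPDFReal_nonneg _ _ _)
      ((integrable_gaussianPDFReal 0 1).integrableOn)]
    have hsupp : Function.support (gaussianPDFReal 0 1) = Set.univ := by
      ext t; simp [Function.mem_support, (gaussianPDFReal_pos 0 1 t one_ne_zero).ne']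
    rw [hsupp, Set.univ_inter, Real.volume_Ioc]
    simp [hab]
  linarith [key]

lemma Phi_lipschitz : LipschitzWith 1 Phi := by
  have hb : ∀ t : ℝ, gaussianPDFReal 0 1 t ≤ 1 := by
    intro t
    unfold gaussianPDFReal
    have h1 : rexp (-(t - 0) ^ 2 / (2 * ((1:ℝ≥0):ℝ))) ≤ 1 := by
      rw [Real.exp_le_one_iff]
      have : (0:ℝ) ≤ (t-0)^2 := sq_nonneg _
      have : ((1:ℝ≥0):ℝ) = 1 := rfl
      rw [this]
      nlinarith
    have h2 : (√(2 * π * ((1:ℝ≥0):ℝ)))⁻¹ ≤ 1 := by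
      rw [inv_le_one_iff₀]
      right
      rw [show ((1:ℝ≥0):ℝ) = 1 from rfl, mul_one]
      nlinarith [Real.sq_sqrt (by positivity : (0:ℝ) ≤ 2 * π), Real.sqrt_nonneg (2*π), pi_gt_three]
    calc (√(2 * π * ((1:ℝ≥0):ℝ)))⁻¹ * rexp (-(t - 0) ^ 2 / (2 * ((1:ℝ≥0):ℝ)))
        ≤ 1 * 1 := by
          apply mul_le_mul h2 h1 (le_of_lt (Real.exp_pos _)) zero_le_one
      _ = 1 := by ring
  have key : ∀ a b : ℝ, a ≤ b → Phi b - Phi a ≤ b - a := by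
    intro a b hab
    have hkey : Phi b = Phi a + ∫ t in Set.Ioc a b, gaussianPDFReal 0 1 t := by
      rw [Phi_eq_integral, Phi_eq_integral, ← setIntegral_union (Set.Iic_disjoint_Ioc le_rfl)
        measurableSet_Ioc ((integrable_gaussianPDFReal 0 1).integrableOn)
        ((integrable_gaussianPDFReal 0 1).integrableOn), Set.Iic_union_Ioc_eq_Iic hab]
    have hthis : Phi b - Phi a = ∫ t in Set.Ioc a b, gaussianPDFReal 0 1 t := by linarith
    rw [hthis]
    calc ∫ t in Set.Ioc a b, gaussianPDFReal 0 1 t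
        ≤ ∫ _ in Set.Ioc a b, (1:ℝ) := by
          apply setIntegral_mono_on ((integrable_gaussianPDFReal 0 1).integrableOn)
            (integrableOn_const (by rw [Real.volume_Ioc]; exact ENNReal.ofReal_ne_top))
            measurableSet_Ioc
          intro t _
          exact hb t
      _ = b - a := by
          rw [setIntegral_const, Real.volume_real_Ioc_of_le hab, smul_eq_mul, mul_one]
  rw [lipschitzWith_iff_dist_le_mul]
  intro a b
  rw [Real.dist_eq, Real.dist_eq, NNReal.coe_one, one_mul]
  rcases le_total a b with hab | hab
  · rw [abs_of_nonpos (by linarith [(Phi_strictMono.monotone hab)] : Phi a - Phi b ≤ 0),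
      abs_of_nonpos (by linarith : a - b ≤ 0)]
    linarith [key a b hab]
  · rw [abs_of_nonneg (by linarith [(Phi_strictMono.monotone hab)] : 0 ≤ Phi a - Phi b),
      abs_of_nonneg (by linarith : 0 ≤ a - b)]
    linarith [key b a hab]

lemma Phi_continuous : Continuous Phi := Phi_lipschitz.continuous

lemma Phi_le_one (y : ℝ) : Phi y ≤ 1 := by
  rw [Phi]
  have := prob_le_one (μ := gaussianReal 0 1) (s := Set.Iic y)
  calc ((gaussianReal 0 1) (Set.Iic y)).toReal ≤ (1 : ℝ≥0∞).toReal :=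
        ENNReal.toReal_mono ENNReal.one_ne_top this
    _ = 1 := by simp

lemma Phi_nonneg (y : ℝ) : 0 ≤ Phi y := ENNReal.toReal_nonneg

lemma Phi_pos (y : ℝ) : 0 < Phi y :=
  lt_of_le_of_lt (Phi_nonneg (y - 1)) (Phi_strictMono (by linarith))

lemma Phi_lt_one (y : ℝ) : Phi y < 1 :=
  lt_of_lt_of_le (Phi_strictMono (by linarith : y < y + 1)) (Phi_le_one (y + 1))

lemma Phi_tendsto_atTop : Tendsto Phi atTop (𝓝 1) := by
  have h1 : Tendsto (fun y => gaussianReal 0 1 (Set.Iic y)) atTop (𝓝 (gaussianReal 0 1 Set.univ)) :=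
    tendsto_measure_Iic_atTop _
  rw [measure_univ] at h1
  have h2 := (ENNReal.tendsto_toReal ENNReal.one_ne_top).comp h1
  have h3 : Tendsto (fun x => ((gaussianReal 0 1) (Set.Iic x)).toReal) atTop (𝓝 1) := by
    simpa [Function.comp_def] using h2
  exact h3

lemma gaussianReal_map_neg : Measure.map (fun t : ℝ => -t) (gaussianReal 0 1) = gaussianReal 0 1 := by
  have : (fun t : ℝ => -t) = fun t : ℝ => (-1 : ℝ) * t := by funext t; ring
  rw [this, gaussianReal_map_const_mul]
  norm_num

lemma gaussianReal_singleton (y : ℝ) : gaussianReal 0 1 {y} = 0 :=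
  gaussianReal_absolutelyContinuous 0 one_ne_zero (Real.volume_singleton)

lemma gauss_Ici (y : ℝ) : gaussianReal 0 1 (Set.Ici y) = gaussianReal 0 1 (Set.Ioi y) := by
  rw [← Set.Ioi_union_left, measure_union (Set.disjoint_singleton_right.mpr (by simp))
    (measurableSet_singleton y), gaussianReal_singleton, add_zero]

lemma Phi_neg_eq (y : ℝ) : Phi (-y) = 1 - Phi y := by
  have hmap : gaussianReal 0 1 (Set.Iic (-y)) = gaussianReal 0 1 (Set.Ici y) := by
    conv_rhs => rw [← _root_.gaussianReal_map_neg]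
    rw [Measure.map_apply measurable_neg measurableSet_Ici]
    congr 1
    ext t
    simp
  have hsum : gaussianReal 0 1 (Set.Iic y) + gaussianReal 0 1 (Set.Ioi y) = 1 := by
    rw [← measure_union (Set.Iic_disjoint_Ioi le_rfl) measurableSet_Ioi, Set.Iic_union_Ioi,
      measure_univ]
  have h1 : Phi y + (gaussianReal 0 1 (Set.Ioi y)).toReal = 1 := by
    rw [Phi, ← ENNReal.toReal_add (measure_ne_top _ _) (measure_ne_top _ _), hsum]
    simp
  rw [Phi, hmap, gauss_Ici]
  linarith

lemma Phi_tendsto_atBot : Tendsto Phi atBot (𝓝 0) := by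
  have h1 : Tendsto (fun y : ℝ => Phi (-y)) atTop (𝓝 0) := by
    have h2 : Tendsto (fun y : ℝ => 1 - Phi y) atTop (𝓝 (1 - 1)) :=
      (tendsto_const_nhds).sub Phi_tendsto_atTop
    simp only [sub_self] at h2
    simpa [Phi_neg_eq] using h2
  have h3 := h1.comp tendsto_neg_atBot_atTop
  have : ((fun y : ℝ => Phi (-y)) ∘ Neg.neg) = Phi := by
    funext y; simp [Function.comp]
  rwa [this] at h3

lemma Phi_surj {p : ℝ} (h0 : 0 < p) (h1 : p < 1) : ∃ y, Phi y = p := by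
  have ha : ∃ a, Phi a < p := by
    have := Phi_tendsto_atBot.eventually_lt_const h0
    exact this.exists
  have hb : ∃ b, p < Phi b := by
    have := Phi_tendsto_atTop.eventually_const_lt h1
    exact this.exists
  obtain ⟨a, ha⟩ := ha
  obtain ⟨b, hb⟩ := hb
  have hab : a ≤ b := (Phi_strictMono.lt_iff_lt.mp (lt_trans ha hb)).le
  have := intermediate_value_Icc hab Phi_continuous.continuousOn
  obtain ⟨y, _, hy⟩ := this ⟨ha.le, hb.le⟩
  exact ⟨y, hy⟩

lemma Phi_PhiInv {p : ℝ} (h0 : 0 < p) (h1 : p < 1) : Phi (PhiInv p) = p :=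
  Function.invFun_eq (Phi_surj h0 h1)

lemma Phi_zero : Phi 0 = 1 / 2 := by
  have := Phi_neg_eq 0
  rw [neg_zero] at this
  linarith

lemma Phi_half_lt (u : ℝ) : 1 / 2 < Phi u ↔ 0 < u := by
  rw [← Phi_zero]
  exact ⟨fun h => Phi_strictMono.lt_iff_lt.mp h, fun h => Phi_strictMono h⟩

lemma gauss_Iic_scaled {w : ℝ≥0} (hw : w ≠ 0) (t : ℝ) :
    gaussianReal 0 w (Set.Iic t) = ENNReal.ofReal (Phi (t / √(w : ℝ))) := by
  have hwpos : (0:ℝ) < w := lt_of_le_of_ne w.coe_nonneg (by exact_mod_cast (Ne.symm hw))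
  have hs : (0:ℝ) < √(w:ℝ) := Real.sqrt_pos.mpr hwpos
  have hmap : Measure.map (fun a : ℝ => √(w:ℝ) * a) (gaussianReal 0 1) = gaussianReal 0 w := by
    rw [gaussianReal_map_const_mul]
    have : (⟨(√(w:ℝ))^2, sq_nonneg _⟩ : ℝ≥0) = w := by
      ext; simp [Real.sq_sqrt hwpos.le]
    rw [mul_zero]; congr 1; ext; simp [Real.sq_sqrt hwpos.le]
  rw [← hmap, Measure.map_apply (measurable_const_mul _) measurableSet_Iic]
  have : (fun a : ℝ => √(w:ℝ) * a) ⁻¹' (Set.Iic t) = Set.Iic (t / √(w:ℝ)) := by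
    ext a
    simp only [Set.mem_preimage, Set.mem_Iic]
    rw [← le_div_iff₀' hs]
  rw [this, Phi_ofReal]

lemma neyman_pearson {α : Type*} [MeasurableSpace α] (p : Measure α) [IsFiniteMeasure p]
    (r : α → ℝ≥0∞) (hr : Measurable r) (s : α → ℝ) (hs : Measurable s) (t : ℝ) (c : ℝ≥0∞)
    (hc1 : ∀ y, s y ≤ t → r y ≤ c) (hc2 : ∀ y, t ≤ s y → c ≤ r y)
    (A : Set α) (hA : MeasurableSet A) (hpt : p {y | s y ≤ t} = p A) :
    p.withDensity r {y | s y ≤ t} ≤ p.withDensity r A := by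
  set H : Set α := {y | s y ≤ t} with hH
  have hHm : MeasurableSet H := hs measurableSet_Iic
  set q := p.withDensity r with hq
  have hqH : q H = q (H ∩ A) + q (H \ A) := (measure_inter_add_diff H hA).symm
  have hqA : q A = q (A ∩ H) + q (A \ H) := (measure_inter_add_diff A hHm).symm
  have hpHA : p (H \ A) = p (A \ H) := by
    have h1 : p H = p (H ∩ A) + p (H \ A) := (measure_inter_add_diff H hA).symm
    have h2 : p A = p (A ∩ H) + p (A \ H) := (measure_inter_add_diff A hHm).symm
    rw [Set.inter_comm A H] at h2
    rw [hpt, h2] at h1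
    exact (ENNReal.add_right_inj (measure_ne_top p _)).mp h1.symm
  have key1 : q (H \ A) ≤ c * p (H \ A) := by
    rw [hq, withDensity_apply _ (hHm.diff hA)]
    calc ∫⁻ y in H \ A, r y ∂p ≤ ∫⁻ _ in H \ A, c ∂p := by
          apply setLIntegral_mono' (hHm.diff hA)
          intro y hy
          exact hc1 y hy.1
      _ = c * p (H \ A) := by rw [setLIntegral_const]
  have key2 : c * p (A \ H) ≤ q (A \ H) := by
    rw [hq, withDensity_apply _ (hA.diff hHm)]
    calc c * p (A \ H) = ∫⁻ _ in A \ H, c ∂p := by rw [setLIntegral_const]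
      _ ≤ ∫⁻ y in A \ H, r y ∂p := by
          apply setLIntegral_mono' (hA.diff hHm)
          intro y hy
          exact hc2 y (le_of_lt (lt_of_not_ge hy.2))
  calc q H = q (H ∩ A) + q (H \ A) := hqH
    _ ≤ q (A ∩ H) + q (A \ H) := by
        apply add_le_add
        · rw [Set.inter_comm]
        · calc q (H \ A) ≤ c * p (H \ A) := key1
            _ = c * p (A \ H) := by rw [hpHA]
            _ ≤ q (A \ H) := key2
    _ = q A := hqA.symm

lemma gauss_cert {m : ℕ} (σ : ℝ) (hσ : 0 < σ) (δ : Fin m → ℝ) (hδ0 : δ ≠ 0)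
    (A : Set (Fin m → ℝ)) (hA : MeasurableSet A) (hval : ℝ)
    (hpA : Measure.pi (fun _ : Fin m => gaussianReal 0 ⟨σ^2, sq_nonneg σ⟩) A = ENNReal.ofReal hval)
    (h1 : 1/2 < hval) (h2 : hval < 1)
    (hrad : √(∑ i, δ i ^ 2) < σ * PhiInv hval) :
    1/2 < ((Measure.map (fun y => y + δ)
      (Measure.pi fun _ : Fin m => gaussianReal 0 ⟨σ^2, sq_nonneg σ⟩)) A).toReal := by
  set v : ℝ≥0 := ⟨σ^2, sq_nonneg σ⟩ with hvdef
  have hvR : (v : ℝ) = σ^2 := rfl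
  have hvpos : 0 < v := by rw [← NNReal.coe_pos, hvR]; positivity
  have hv : v ≠ 0 := hvpos.ne'
  set p := Measure.pi (fun _ : Fin m => gaussianReal 0 v) with hpdef
  set D := ∑ i, δ i ^ 2 with hDdef
  have hD : 0 < D := by
    obtain ⟨i, hi⟩ := Function.ne_iff.mp hδ0
    exact Finset.sum_pos' (fun j _ => sq_nonneg _) ⟨i, Finset.mem_univ i, (sq_nonneg _).lt_of_ne (Ne.symm (pow_ne_zero 2 hi))⟩
  have h0 : 0 < hval := lt_trans (by norm_num) h1
  set s : (Fin m → ℝ) → ℝ := fun y => ∑ i, δ i * y i with hsdef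
  have hsm : Measurable s := measurable_sum_mul δ
  set w : ℝ≥0 := ⟨D, hD.le⟩ * v with hwdef
  have hwne : w ≠ 0 := by
    intro hc
    rw [hwdef] at hc
    rcases mul_eq_zero.mp hc with hc | hc
    · exact hD.ne' (congrArg Subtype.val hc)
    · exact hv hc
  have hwR : (w : ℝ) = D * σ^2 := by rw [hwdef]; push_cast [hvR]; rfl
  have hsqrtw : √(w : ℝ) = √D * σ := by
    rw [hwR, Real.sqrt_mul hD.le, Real.sqrt_sq hσ.le]
  have hsD : 0 < √D := Real.sqrt_pos.mpr hD
  have hlaw : Measure.map s p = gaussianReal 0 w := by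
    rw [hpdef, hsdef, map_sum_pi v m δ]
  have hPinv := Phi_PhiInv h0 h2
  set t : ℝ := √D * σ * PhiInv hval with htdef
  have hmem : ∀ u : ℝ, p {y | s y ≤ u} = ENNReal.ofReal (Phi (u / (√D * σ))) := by
    intro u
    have : {y | s y ≤ u} = s ⁻¹' (Set.Iic u) := rfl
    rw [this, ← Measure.map_apply hsm measurableSet_Iic, hlaw, gauss_Iic_scaled hwne, hsqrtw]
  have hpH : p {y | s y ≤ t} = p A := by
    rw [hmem t, hpA]
    congr 1
    rw [← hPinv]
    congr 1
    rw [htdef]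
    field_simp
  -- density representation
  set f : Fin m → ℝ → ℝ≥0∞ :=
    fun i u => ENNReal.ofReal (rexp ((2 * δ i * u - (δ i)^2) / (2 * (v:ℝ)))) with hfdef
  have hfm : ∀ i, Measurable (f i) := fun i =>
    ((((measurable_id.const_mul _).sub_const _).div_const _).exp).ennreal_ofReal
  set r : (Fin m → ℝ) → ℝ≥0∞ :=
    fun y => ENNReal.ofReal (rexp ((2 * s y - D) / (2 * (v:ℝ)))) with hrdef
  have hrm : Measurable r :=
    ((((hsm.const_mul 2).sub_const D).div_const _).exp).ennreal_ofReal
  have hcoord : ∀ i : Fin m, gaussianReal (δ i) v = (gaussianReal 0 v).withDensity (f i) :=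
    fun i => gaussianReal_shift_withDensity v hv (δ i)
  haveI hPM : ∀ i : Fin m, IsProbabilityMeasure ((gaussianReal 0 v).withDensity (f i)) :=
    fun i => by rw [← hcoord i]; infer_instance
  have hq_wd : Measure.map (fun y => y + δ) p = p.withDensity r := by
    rw [hpdef, pi_map_add v δ]
    calc Measure.pi (fun i => gaussianReal (δ i) v)
        = Measure.pi (fun i => (gaussianReal 0 v).withDensity (f i)) := by
          congr 1; funext i; exact hcoord i
      _ = (Measure.pi fun _ : Fin m => gaussianReal 0 v).withDensity
            (fun y => ∏ i, f i (y i)) := pi_withDensity _ f hfm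
      _ = (Measure.pi fun _ : Fin m => gaussianReal 0 v).withDensity r := by
          congr 1
          funext y
          rw [hrdef]
          simp only [hfdef]
          rw [← ENNReal.ofReal_prod_of_nonneg (fun i _ => (Real.exp_pos _).le)]
          congr 1
          rw [← Real.exp_sum]
          congr 1
          rw [← Finset.sum_div]
          congr 1
          rw [Finset.sum_sub_distrib]
          have e1 : ∑ i, 2 * δ i * (y i) = 2 * s y := by
            simp only [hsdef]
            rw [Finset.mul_sum]
            exact Finset.sum_congr rfl fun i _ => by ring
          rw [e1, ← hDdef]
  set c : ℝ≥0∞ := ENNReal.ofReal (rexp ((2 * t - D) / (2 * (v:ℝ)))) with hcdef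
  have h2v : (0:ℝ) < 2 * (v:ℝ) := by rw [hvR]; positivity
  have hc1 : ∀ y, s y ≤ t → r y ≤ c := by
    intro y hy
    apply ENNReal.ofReal_le_ofReal
    apply Real.exp_le_exp.mpr
    apply div_le_div_of_nonneg_right ?_ h2v.le
    linarith
  have hc2 : ∀ y, t ≤ s y → c ≤ r y := by
    intro y hy
    apply ENNReal.ofReal_le_ofReal
    apply Real.exp_le_exp.mpr
    apply div_le_div_of_nonneg_right ?_ h2v.le
    linarith
  have hNP : (p.withDensity r) {y | s y ≤ t} ≤ (p.withDensity r) A :=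
    neyman_pearson p r hrm s hsm t c hc1 hc2 A hA hpH
  rw [← hq_wd] at hNP
  have hmap_meas : Measurable (fun y : Fin m → ℝ => y + δ) :=
    measurable_add_const δ
  haveI : IsProbabilityMeasure (Measure.map (fun y => y + δ) p) := by
    rw [hpdef, pi_map_add]; infer_instance
  have hDs : √D * √D = D := Real.mul_self_sqrt hD.le
  have hqH : (Measure.map (fun y => y + δ) p) {y | s y ≤ t}
      = ENNReal.ofReal (Phi (PhiInv hval - √D / σ)) := by
    rw [Measure.map_apply hmap_meas (show MeasurableSet {y | s y ≤ t} from hsm measurableSet_Iic)]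
    have hpre : (fun y : Fin m → ℝ => y + δ) ⁻¹' {y | s y ≤ t} = {y | s y ≤ t - D} := by
      ext y
      simp only [Set.mem_preimage, Set.mem_setOf_eq]
      have hsy : s (y + δ) = s y + D := by
        simp only [hsdef, hDdef]
        rw [← Finset.sum_add_distrib]
        apply Finset.sum_congr rfl
        intro i _
        have : (y + δ) i = y i + δ i := rfl
        rw [this]; ring
      rw [hsy]
      constructor <;> intro <;> linarith
    rw [hpre, hmem (t - D)]
    congr 2
    rw [htdef]
    field_simp
    nlinarith [hDs, hσ, hsD]
  have hgt : 1/2 < Phi (PhiInv hval - √D / σ) := by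
    rw [Phi_half_lt]
    have : √D / σ < PhiInv hval := (div_lt_iff₀ hσ).mpr (by linarith [hrad])
    linarith
  calc (1:ℝ)/2 < Phi (PhiInv hval - √D / σ) := hgt
    _ = ((Measure.map (fun y => y + δ) p) {y | s y ≤ t}).toReal := by
        rw [hqH, ENNReal.toReal_ofReal (Phi_nonneg _)]
    _ ≤ ((Measure.map (fun y => y + δ) p) A).toReal :=
        ENNReal.toReal_mono (measure_ne_top _ _) hNP

end Helpers

/-- **Theorem 4 (Certified Defense Budget for Attribute Perturbations)**: if the attribute
perturbation budget `ε_X` is below the Gaussian-smoothing certified radius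
`σ·|Φ⁻¹(h(b,x))|` for every binary-noise realization `b` of the adjacency input, then the
inner smoothed classifier `g̃_X` is invariant pointwise under any attribute perturbation
`δ` with `‖δ‖₂ ≤ ε_X`; consequently, for any distribution `ν` of the binary noise `Γ` and
any `a`, the acceptance probability is unchanged and the doubly smoothed classifier
`g̃_{A,X}` returns the same class. Here `⊕` is coordinatewise XOR (addition in
`ZMod 2`). -/
theorem stmt_16
    (n d : ℕ) (σ : ℝ) (hσ : 0 < σ)
    (g : (Fin n → ZMod 2) → EuclideanSpace ℝ (Fin d) → Bool)
    (hg : ∀ b, Measurable (g b))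
    (μG : Measure (EuclideanSpace ℝ (Fin d)))
    (hμG : μG = (Measure.pi (fun _ => gaussianReal 0 ⟨σ ^ 2, sq_nonneg σ⟩)).map
      (MeasurableEquiv.toLp 2 (Fin d → ℝ)))
    (h : (Fin n → ZMod 2) → EuclideanSpace ℝ (Fin d) → ℝ)
    (hh : ∀ b x, h b x = (μG {e | g b (x + e) = true}).toReal)
    (gX : (Fin n → ZMod 2) → EuclideanSpace ℝ (Fin d) → Bool)
    (hgX : ∀ b x, gX b x = true ↔ 1 / 2 < h b x)
    (x : EuclideanSpace ℝ (Fin d))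
    (hbx : ∀ b, 0 < h b x ∧ h b x < 1 ∧ h b x ≠ 1 / 2)
    (εX : ℝ) (hεX : 0 < εX)
    (hεXlt : ∀ b, εX < σ * |PhiInv (h b x)|)
    (ν : Measure (Fin n → ZMod 2)) [IsProbabilityMeasure ν]
    (a : Fin n → ZMod 2)
    (gAX : (Fin n → ZMod 2) → EuclideanSpace ℝ (Fin d) → Bool)
    (hgAX : ∀ a' x', gAX a' x' = true ↔
      ν {γ | gX (a' + γ) x' = false} < ν {γ | gX (a' + γ) x' = true})
    (δ : EuclideanSpace ℝ (Fin d)) (hδ : ‖δ‖ ≤ εX) :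
    (∀ b, gX b (x + δ) = gX b x) ∧
      ν {γ | gX (a + γ) (x + δ) = true} = ν {γ | gX (a + γ) x = true} ∧
      gAX a (x + δ) = gAX a x := by
  have hmain : ∀ b, gX b (x + δ) = gX b x := by
    intro b
    by_cases hδ0 : δ = 0
    · rw [hδ0, add_zero]
    obtain ⟨hb0, hb1, hbne⟩ := hbx b
    set δ' : Fin d → ℝ := (δ : Fin d → ℝ) with hδ'def
    have hδ0' : δ' ≠ 0 := by
      intro hc; apply hδ0; ext i; exact congrFun hc i
    -- the norm as a sum of squares
    have hnorm : ‖δ‖ = √(∑ i, δ' i ^ 2) := by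
      rw [EuclideanSpace.norm_eq]
      congr 1
      apply Finset.sum_congr rfl
      intro i _
      rw [Real.norm_eq_abs, sq_abs]
    set p : Measure (Fin d → ℝ) := Measure.pi (fun _ => gaussianReal 0 ⟨σ ^ 2, sq_nonneg σ⟩)
      with hpdef
    have hμG' : μG = p.map (MeasurableEquiv.toLp 2 (Fin d → ℝ)) := hμG
    haveI : IsProbabilityMeasure p := by
      have hv : ∀ v : ℝ≥0, IsProbabilityMeasure (Measure.pi (fun _ : Fin d => gaussianReal 0 v)) :=
        fun v => inferInstance
      exact hv _
    set A : Set (Fin d → ℝ) := {e : Fin d → ℝ | g b (x + WithLp.toLp 2 e) = true} with hAdef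
    have haddm : Measurable (fun e : EuclideanSpace ℝ (Fin d) => x + e) :=
      measurable_const_add x
    have hAmeas : MeasurableSet A :=
      ((hg b).comp (haddm.comp (MeasurableEquiv.toLp 2 (Fin d → ℝ)).measurable)) (measurableSet_singleton true)
    have hmap_meas : Measurable (fun y : Fin d → ℝ => y + δ') :=
      measurable_add_const δ'
    have hpA : p A = ENNReal.ofReal (h b x) := by
      rw [hh b x, hμG', MeasurableEquiv.map_apply]
      exact (ENNReal.ofReal_toReal (measure_ne_top _ _)).symm
    have hT : ∀ e : EuclideanSpace ℝ (Fin d), x + δ + e = x + (e + δ) := by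
      intro e; abel
    have hset : (MeasurableEquiv.toLp 2 (Fin d → ℝ)) ⁻¹' {e : EuclideanSpace ℝ (Fin d) | g b (x + δ + e) = true}
        = (fun y : Fin d → ℝ => y + δ') ⁻¹' A := by
      ext e
      change g b (x + δ + (MeasurableEquiv.toLp 2 (Fin d → ℝ)) e) = true ↔ g b (x + WithLp.toLp 2 (e + δ')) = true
      rw [hT]
      rfl
    have hval2 : h b (x + δ)
        = ((Measure.map (fun y : Fin d → ℝ => y + δ') p) A).toReal := by
      rw [hh b (x + δ), hμG', MeasurableEquiv.map_apply]
      congr 1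
      rw [hset]
      exact (Measure.map_apply hmap_meas hAmeas).symm
    -- case split on which side of 1/2 we are
    rcases lt_or_gt_of_ne hbne with hlt | hgt
    · -- h b x < 1/2 : both classifiers output false
      have hgXx : gX b x = false := by
        rw [← Bool.not_eq_true, hgX b x]
        intro hc; linarith
      have hne0 : (0:ℝ) < 1 - h b x := by linarith
      have hone : 1 - h b x < 1 := by linarith
      have hhalf : 1/2 < 1 - h b x := by linarith
      have hpAc : p Aᶜ = ENNReal.ofReal (1 - h b x) := by
        rw [prob_compl_eq_one_sub hAmeas, hpA,
          ENNReal.ofReal_sub 1 hb0.le, ENNReal.ofReal_one]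
      have hPinvneg : PhiInv (h b x) < 0 := by
        by_contra hc
        push_neg at hc
        have h1 : Phi 0 ≤ Phi (PhiInv (h b x)) := Phi_strictMono.monotone hc
        rw [Phi_zero, Phi_PhiInv hb0 hb1] at h1
        linarith
      have hPneg : PhiInv (1 - h b x) = - PhiInv (h b x) := by
        apply Phi_strictMono.injective
        rw [Phi_PhiInv hne0 hone, Phi_neg_eq, Phi_PhiInv hb0 hb1]
      have hrad : √(∑ i, δ' i ^ 2) < σ * PhiInv (1 - h b x) := by
        rw [hPneg, ← hnorm]
        calc ‖δ‖ ≤ εX := hδ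
          _ < σ * |PhiInv (h b x)| := hεXlt b
          _ = σ * (- PhiInv (h b x)) := by rw [abs_of_neg hPinvneg]
      have hcert := gauss_cert σ hσ δ' hδ0' Aᶜ hAmeas.compl (1 - h b x) hpAc hhalf hone hrad
      -- conclude h b (x+δ) < 1/2
      haveI : IsProbabilityMeasure (Measure.map (fun y : Fin d → ℝ => y + δ') p) := by
        exact Measure.isProbabilityMeasure_map hmap_meas.aemeasurable
      set q := Measure.map (fun y : Fin d → ℝ => y + δ') p with hqdef
      have hcompl : (q Aᶜ).toReal = 1 - (q A).toReal := by
        rw [prob_compl_eq_one_sub hAmeas,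
          ENNReal.toReal_sub_of_le prob_le_one ENNReal.one_ne_top, ENNReal.toReal_one]
      rw [hcompl] at hcert
      have hlt2 : h b (x + δ) < 1/2 := by
        rw [hval2]
        linarith
      have : gX b (x + δ) = false := by
        rw [← Bool.not_eq_true, hgX b (x + δ)]
        intro hc; linarith
      rw [this, hgXx]
    · -- h b x > 1/2 : both classifiers output true
      have hgXx : gX b x = true := (hgX b x).mpr hgt
      have hPinvpos : 0 < PhiInv (h b x) := by
        by_contra hc
        push_neg at hc
        have h1 : Phi (PhiInv (h b x)) ≤ Phi 0 := Phi_strictMono.monotone hc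
        rw [Phi_zero, Phi_PhiInv hb0 hb1] at h1
        linarith
      have hrad : √(∑ i, δ' i ^ 2) < σ * PhiInv (h b x) := by
        rw [← hnorm]
        calc ‖δ‖ ≤ εX := hδ
          _ < σ * |PhiInv (h b x)| := hεXlt b
          _ = σ * PhiInv (h b x) := by rw [abs_of_pos hPinvpos]
      have hcert := gauss_cert σ hσ δ' hδ0' A hAmeas (h b x) hpA hgt hb1 hrad
      have hgt2 : 1/2 < h b (x + δ) := by
        rw [hval2]
        exact hcert
      rw [(hgX b (x + δ)).mpr hgt2, hgXx]
  have hsettrue : {γ | gX (a + γ) (x + δ) = true} = {γ | gX (a + γ) x = true} := by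
    ext γ
    simp only [Set.mem_setOf_eq, hmain (a + γ)]
  have hsetfalse : {γ | gX (a + γ) (x + δ) = false} = {γ | gX (a + γ) x = false} := by
    ext γ
    simp only [Set.mem_setOf_eq, hmain (a + γ)]
  refine ⟨hmain, by rw [hsettrue], ?_⟩
  have hiff : (gAX a (x + δ) = true) ↔ (gAX a x = true) := by
    rw [hgAX a (x + δ), hgAX a x, hsettrue, hsetfalse]
  cases hgx : gAX a x with
  | true => exact hiff.mpr hgx
  | false =>
      cases hgy : gAX a (x + δ) with
      | false => rfl
      | true => exact absurd (hiff.mp hgy) (by simp [hgx])
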